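/- For a constructor term over a simple sorted signature, size is polynomially bounded in depth: there exists a constant d depending only on the signature such that for every well-typed constructor term t of a sort of rank r, |t| ≤ d^r · depth(t)^{r+1}. -/

import Mathlib

inductive Term (F V : Type) : Type
  | var : V → Term F V
  | fn : F → List (Term F V) → Term F V

namespace Term
variable {F V : Type}

mutual
  def size : Term F V → ℕ
    | .var _ => 1
    | .fn _ ts => 1 + sizeList ts
  def sizeList : List (Term F V) → ℕ
    | [] => 0
    | t :: ts => size t + sizeList ts
end

mutual
  def depth : Term F V → ℕ
    | .var _ => 0
    | .fn _ ts => 1 + depthList ts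
  def depthList : List (Term F V) → ℕ
    | [] => 0
    | t :: ts => max (depth t) (depthList ts)
end

mutual
  def width : Term F V → ℕ
    | .var _ => 1
    | .fn _ [] => 1
    | .fn _ (t :: ts) => max (ts.length + 1) (max (width t) (widthList ts))
  def widthList : List (Term F V) → ℕ
    | [] => 1
    | t :: ts => max (width t) (widthList ts)
end

mutual
  def bnorm : Term F V → ℕ
    | .var _ => 1
    | .fn _ ts => 1 + max ts.length (bnormList ts)
  def bnormList : List (Term F V) → ℕ
    | [] => 0
    | t :: ts => max (bnorm t) (bnormList ts)
end

mutual
  def subst (σ : V → Term F V) : Term F V → Term F V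
    | .var x => σ x
    | .fn f ts => .fn f (substList σ ts)
  def substList (σ : V → Term F V) : List (Term F V) → List (Term F V)
    | [] => []
    | t :: ts => subst σ t :: substList σ ts
end

/-- The equivalence on terms induced by an equivalence `eqv` on function symbols:
`s ≈ t` iff `s = t`, or the roots are equivalent and the arguments are pairwise
equivalent up to a permutation. -/
inductive TermEq (eqv : F → F → Prop) : Term F V → Term F V → Prop
  | refl (t) : TermEq eqv t t
  | fn {f g : F} {ss ts : List (Term F V)} (hfg : eqv f g)
      (π : Fin ss.length → Fin ts.length) (hbij : Function.Bijective π)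
      (h : ∀ i, TermEq eqv (ss.get i) (ts.get (π i))) :
      TermEq eqv (.fn f ss) (.fn g ts)

/-- The (reflexive) subterm relation. -/
inductive Subterm : Term F V → Term F V → Prop
  | refl (t) : Subterm t t
  | arg {s t : Term F V} {f : F} {ts : List (Term F V)} :
      t ∈ ts → Subterm s t → Subterm s (.fn f ts)

end Term

namespace Term
variable {S F V : Type}

mutual
  /-- Depth, where the depth of a variable or constant is 1. -/
  def depth1 : Term F V → ℕ
    | .var _ => 1
    | .fn _ ts => 1 + depth1List ts
  def depth1List : List (Term F V) → ℕ
    | [] => 0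
    | t :: ts => max (depth1 t) (depth1List ts)
end

/-- Well-typed terms over an `S`-sorted signature with arities `ar`,
result types `typeOf` and sorted variables `vsort`. -/
inductive WellTyped (ar : F → List S) (typeOf : F → S) (vsort : V → S) :
    Term F V → S → Prop
  | var (x : V) : WellTyped ar typeOf vsort (.var x) (vsort x)
  | fn {f : F} {ts : List (Term F V)} (hlen : ts.length = (ar f).length)
      (h : ∀ i : Fin ts.length,
        WellTyped ar typeOf vsort (ts.get i) ((ar f).get (Fin.cast hlen i))) :
      WellTyped ar typeOf vsort (.fn f ts) (typeOf f)

/-- A sorted signature is simple (w.r.t. a rank function on sorts) if for every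
(constructor) symbol `c : (s₁,…,sₙ) → s` each `sᵢ` has rank at most that of `s`,
and at most one `sᵢ` has rank equal to that of `s`. -/
def SimpleSig (ar : F → List S) (typeOf : F → S) (rank : S → ℕ) : Prop :=
  ∀ f : F, (∀ s' ∈ ar f, rank s' ≤ rank (typeOf f)) ∧
    ((ar f).countP (fun s' => decide (rank s' = rank (typeOf f)))) ≤ 1

end Term

open Term


namespace SimpleAux
open Term
variable {S F V : Type}

lemma depth1_pos (t : Term F V) : 1 ≤ depth1 t := by
  cases t with
  | var x => simp [depth1]
  | fn f ts => simp [depth1]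

lemma depth1_le_depth1List {t : Term F V} : ∀ {ts : List (Term F V)}, t ∈ ts →
    depth1 t ≤ depth1List ts := by
  intro ts
  induction ts with
  | nil => intro h; simp at h
  | cons a l ih =>
    intro h
    simp only [List.mem_cons] at h
    simp only [depth1List]
    rcases h with h | h
    · subst h; exact le_max_left _ _
    · exact le_trans (ih h) (le_max_right _ _)

lemma sizeList_bound (rk : S → ℕ) (r big small : ℕ) :
    ∀ (l : List (Term F V)) (σ : List S) (hlen : l.length = σ.length),
    (∀ i : Fin l.length,
      size (l.get i) ≤ if rk (σ.get (Fin.cast hlen i)) = r then big else small) →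
    sizeList l ≤ (σ.countP (fun s => decide (rk s = r))) * big + l.length * small := by
  intro l
  induction l with
  | nil => intro σ _ _; simp [sizeList]
  | cons t l' ih =>
    intro σ hlen h
    cases σ with
    | nil => simp at hlen
    | cons s σ' =>
      have hlen' : l'.length = σ'.length := by simpa using hlen
      have h0 := h ⟨0, by simp⟩
      simp only [List.get] at h0
      have hrest := ih σ' hlen' (fun i => by
        have := h ⟨i.1 + 1, by simp⟩
        simpa using this)
      simp only [sizeList, List.countP_cons, List.length_cons]
      by_cases hc : rk s = r
      · simp [hc] at h0
        simp only [hc, decide_true, if_true]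
        rw [Nat.add_mul, Nat.add_mul, one_mul, one_mul]
        omega
      · simp [hc] at h0
        have hcd : decide (rk s = r) = false := decide_eq_false hc
        simp only [hcd, Bool.false_eq_true, if_false, Nat.add_zero]
        rw [Nat.add_mul, one_mul]
        omega

end SimpleAux

open SimpleAux in
/-- For a constructor term over a simple sorted signature, size is polynomially
bounded in depth: there is a constant `d` depending only on the signature such
that every well-typed constructor term `t` of a sort of rank `r` satisfies
`|t| ≤ d^r · depth(t)^(r+1)`. -/
theorem simple_signature_size_bound {S F V : Type} [Fintype F]
    (ar : F → List S) (typeOf : F → S) (vsort : V → S) (rank : S → ℕ)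
    (hsimple : SimpleSig ar typeOf rank) :
    ∃ d : ℕ, ∀ (t : Term F V) (s : S), WellTyped ar typeOf vsort t s →
      size t ≤ d ^ rank s * depth1 t ^ (rank s + 1) := by
  classical
  set A := Finset.univ.sup (fun f : F => (ar f).length) with hA
  refine ⟨A + 1, ?_⟩
  intro t s ht
  induction ht with
  | var x =>
    simp only [size, depth1, one_pow, mul_one]
    exact Nat.one_le_pow _ _ (Nat.succ_pos A)
  | @fn f ts hlen h ih =>
    by_cases hts : ts = []
    · subst hts
      simp only [size, sizeList, depth1, depth1List, Nat.add_zero, one_pow, mul_one]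
      exact Nat.one_le_pow _ _ (Nat.succ_pos A)
    · set M := depth1List ts with hMdef
      have hM : 1 ≤ M := by
        obtain ⟨a, ha⟩ := List.exists_mem_of_ne_nil ts hts
        exact le_trans (depth1_pos a) (depth1_le_depth1List ha)
      have hn : ts.length ≤ A := by
        rw [hlen]
        exact Finset.le_sup (f := fun f : F => (ar f).length) (Finset.mem_univ f)
      have hcount := (hsimple f).2
      have hle := (hsimple f).1
      have hrank : ∀ i : Fin ts.length, rank ((ar f).get (Fin.cast hlen i)) ≤ rank (typeOf f) :=
        fun i => hle _ (List.get_mem _ _)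
      have hdle : ∀ i : Fin ts.length, depth1 (ts.get i) ≤ M :=
        fun i => depth1_le_depth1List (List.get_mem _ _)
      cases hr : rank (typeOf f) with
      | zero =>
        have hb := sizeList_bound rank 0 M 0 ts (ar f) hlen (fun i => by
          have h1 := ih i
          have h2 := hrank i
          rw [hr] at h2
          have h3 : rank ((ar f).get (Fin.cast hlen i)) = 0 := Nat.le_zero.mp h2
          rw [h3] at h1 ⊢
          simp only [if_true, pow_zero, one_mul, Nat.zero_add, pow_one] at h1 ⊢
          exact le_trans h1 (hdle i))
        rw [hr] at hcount
        simp only [size, depth1, pow_zero, one_mul, Nat.zero_add, pow_one]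
        have : List.countP (fun s => decide (rank s = 0)) (ar f) * M ≤ 1 * M :=
          Nat.mul_le_mul_right _ hcount
        omega
      | succ k =>
        set d := A + 1 with hd
        set big := d ^ (k + 1) * M ^ (k + 2) with hbig
        set small := d ^ k * M ^ (k + 1) with hsmall
        have hb := sizeList_bound rank (k + 1) big small ts (ar f) hlen (fun i => by
          have h1 := ih i
          have h2 := hrank i
          rw [hr] at h2
          by_cases hcase : rank ((ar f).get (Fin.cast hlen i)) = k + 1
          · rw [hcase] at h1
            simp only [hcase, if_true]
            calc size (ts.get i) ≤ d ^ (k + 1) * depth1 (ts.get i) ^ (k + 1 + 1) := h1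
              _ ≤ big := Nat.mul_le_mul_left _ (Nat.pow_le_pow_left (hdle i) _)
          · simp only [hcase, if_false]
            have h4 : rank ((ar f).get (Fin.cast hlen i)) ≤ k := by omega
            calc size (ts.get i)
                ≤ d ^ rank ((ar f).get (Fin.cast hlen i)) *
                  depth1 (ts.get i) ^ (rank ((ar f).get (Fin.cast hlen i)) + 1) := h1
              _ ≤ d ^ k * M ^ (rank ((ar f).get (Fin.cast hlen i)) + 1) :=
                  Nat.mul_le_mul (Nat.pow_le_pow_right (Nat.succ_le_succ (Nat.zero_le A)) h4)
                    (Nat.pow_le_pow_left (hdle i) _)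
              _ ≤ small := Nat.mul_le_mul_left _ (Nat.pow_le_pow_right hM (by omega)))
        rw [hr] at hcount
        have hcb : List.countP (fun s => decide (rank s = k + 1)) (ar f) * big ≤ big := by
          calc _ ≤ 1 * big := Nat.mul_le_mul_right _ hcount
            _ = big := one_mul _
        have hsz : sizeList ts ≤ big + ts.length * small := le_trans hb (by omega)
        simp only [size, depth1]
        have hX : 1 ≤ small := by
          rw [hsmall]
          calc 1 = 1 * 1 := (one_mul 1).symm
            _ ≤ d ^ k * M ^ (k + 1) :=
              Nat.mul_le_mul (Nat.one_le_pow _ _ (Nat.succ_pos A)) (Nat.one_le_pow _ _ hM)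
        have e1 : M ^ (k + 2) + M ^ (k + 1) ≤ (1 + M) ^ (k + 2) := by
          calc M ^ (k + 2) + M ^ (k + 1) = M ^ (k + 1) * (1 + M) := by ring
            _ ≤ (1 + M) ^ (k + 1) * (1 + M) :=
              Nat.mul_le_mul_right _ (Nat.pow_le_pow_left (by omega) _)
            _ = (1 + M) ^ (k + 2) := (pow_succ _ _).symm
        have e2 : big + d * small ≤ d ^ (k + 1) * (1 + M) ^ (k + 2) := by
          have : big + d * small = d ^ (k + 1) * (M ^ (k + 2) + M ^ (k + 1)) := by
            rw [hbig, hsmall]; ring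
          rw [this]
          exact Nat.mul_le_mul_left _ e1
        have e3 : 1 + ts.length * small ≤ d * small := by
          calc 1 + ts.length * small ≤ small + ts.length * small := Nat.add_le_add_right hX _
            _ = (ts.length + 1) * small := by ring
            _ ≤ d * small := Nat.mul_le_mul_right _ (by omega)
        calc 1 + sizeList ts ≤ 1 + (big + ts.length * small) := Nat.add_le_add_left hsz _
          _ = big + (1 + ts.length * small) := by ring
          _ ≤ big + d * small := Nat.add_le_add_left e3 _
          _ ≤ d ^ (k + 1) * (1 + M) ^ (k + 1 + 1) := e2
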